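/- arXiv:2204.02837 — 2 statements merged into one kernel-verified Lean document; each statement's English description precedes it below -/
import Mathlib

section
/- Let K_v be the 2n×2n block matrix [[K^pv, K^pv],[K^qv, K^qv]] where K^pv and K^qv are diagonal n×n matrices, let T = diag(T_p, T_q) with T_p, T_q diagonal positive, and γ > 0. Then the symmetric part of T⁻¹K_v − γI is negative definite if and only if for every index i the 2×2 matrix [[k_i^pv/τ_{p_i} − γ, (k_i^pv/τ_{p_i} + k_i^qv/τ_{q_i})/2], [(k_i^pv/τ_{p_i} + k_i^qv/τ_{q_i})/2, k_i^qv/τ_{q_i} − γ]] is negative definite. -/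
open Matrix

theorem block_decoupling_negdef {n : ℕ}
    (kpv kqv τp τq : Fin n → ℝ)
    (hτp : ∀ i, 0 < τp i) (hτq : ∀ i, 0 < τq i)
    (γ : ℝ) (hγ : 0 < γ)
    (Kv : Matrix (Fin n ⊕ Fin n) (Fin n ⊕ Fin n) ℝ)
    (hKv : Kv = Matrix.fromBlocks (Matrix.diagonal kpv) (Matrix.diagonal kpv)
        (Matrix.diagonal kqv) (Matrix.diagonal kqv))
    (T : Matrix (Fin n ⊕ Fin n) (Fin n ⊕ Fin n) ℝ)
    (hT : T = Matrix.fromBlocks (Matrix.diagonal τp) 0 0 (Matrix.diagonal τq))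
    (M S : Matrix (Fin n ⊕ Fin n) (Fin n ⊕ Fin n) ℝ)
    (hM : M = T⁻¹ * Kv - γ • (1 : Matrix (Fin n ⊕ Fin n) (Fin n ⊕ Fin n) ℝ))
    (hS : S = (1/2 : ℝ) • (M + Mᵀ)) :
    (∀ x : Fin n ⊕ Fin n → ℝ, x ≠ 0 → x ⬝ᵥ S.mulVec x < 0) ↔
      (∀ i : Fin n, ∀ z : Fin 2 → ℝ, z ≠ 0 →
        z ⬝ᵥ (!![kpv i / τp i - γ, (kpv i / τp i + kqv i / τq i)/2;
                 (kpv i / τp i + kqv i / τq i)/2, kqv i / τq i - γ]).mulVec z < 0) := by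
  set a : Fin n → ℝ := fun i => kpv i / τp i - γ with ha
  set b : Fin n → ℝ := fun i => (kpv i / τp i + kqv i / τq i) / 2 with hb
  set c : Fin n → ℝ := fun i => kqv i / τq i - γ with hc
  -- compute T⁻¹
  have hTinv : T⁻¹ = Matrix.fromBlocks (Matrix.diagonal fun i => (τp i)⁻¹) 0 0
      (Matrix.diagonal fun i => (τq i)⁻¹) := by
    apply Matrix.inv_eq_right_inv
    rw [hT]
    rw [Matrix.fromBlocks_multiply]
    simp only [Matrix.diagonal_mul_diagonal, Matrix.mul_zero, Matrix.zero_mul,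
      add_zero, zero_add]
    have h1 : (fun i => τp i * (τp i)⁻¹) = fun _ => (1 : ℝ) := by
      funext i; exact mul_inv_cancel₀ (hτp i).ne'
    have h2 : (fun i => τq i * (τq i)⁻¹) = fun _ => (1 : ℝ) := by
      funext i; exact mul_inv_cancel₀ (hτq i).ne'
    rw [h1, h2]
    simp [Matrix.diagonal_one, Matrix.fromBlocks_one]
  -- compute S explicitly
  have hS' : S = Matrix.fromBlocks (Matrix.diagonal a) (Matrix.diagonal b)
      (Matrix.diagonal b) (Matrix.diagonal c) := by
    rw [hS, hM, hTinv, hKv]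
    rw [Matrix.fromBlocks_multiply]
    simp only [Matrix.diagonal_mul_diagonal, Matrix.mul_zero, Matrix.zero_mul,
      add_zero, zero_add]
    ext s t
    cases s <;> cases t <;>
      (rename_i i j
       by_cases hij : i = j
       · subst hij
         simp [Matrix.diagonal_apply, Matrix.one_apply, ha, hb, hc]
         try ring
       · simp [Matrix.diagonal_apply, Matrix.one_apply, hij, ha, hb, hc]
         try exact fun h => absurd h.symm hij)
  -- quadratic forms
  have hq2 : ∀ i : Fin n, ∀ z : Fin 2 → ℝ,
      z ⬝ᵥ (!![a i, b i; b i, c i]).mulVec z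
        = a i * z 0 ^ 2 + 2 * b i * (z 0 * z 1) + c i * z 1 ^ 2 := by
    intro i z
    simp [dotProduct, Matrix.mulVec, Fin.sum_univ_two, Matrix.cons_val_zero,
      Matrix.cons_val_one]
    ring
  have hq : ∀ x : Fin n ⊕ Fin n → ℝ, x ⬝ᵥ S.mulVec x
      = ∑ i : Fin n, (a i * x (Sum.inl i) ^ 2
          + 2 * b i * (x (Sum.inl i) * x (Sum.inr i)) + c i * x (Sum.inr i) ^ 2) := by
    intro x
    have hx : x = Sum.elim (fun i => x (Sum.inl i)) (fun i => x (Sum.inr i)) := by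
      funext s; cases s <;> rfl
    rw [hS', hx, Matrix.fromBlocks_mulVec, sumElim_dotProduct_sumElim]
    simp only [Matrix.mulVec_diagonal, dotProduct, Pi.add_apply,
      Matrix.mulVec, Matrix.diagonal_apply]
    rw [← Finset.sum_add_distrib]
    apply Finset.sum_congr rfl
    intro i _
    simp [Finset.mul_sum, Finset.sum_ite_eq', mul_ite]
    ring
  constructor
  · intro h i z hz
    set x : Fin n ⊕ Fin n → ℝ := Sum.elim (fun j => if j = i then z 0 else 0)
        (fun j => if j = i then z 1 else 0) with hxdef
    have hxne : x ≠ 0 := by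
      intro h0
      apply hz
      funext k
      fin_cases k
      · have := congrFun h0 (Sum.inl i); simpa [hxdef] using this
      · have := congrFun h0 (Sum.inr i); simpa [hxdef] using this
    have := h x hxne
    rw [hq] at this
    have hsum : ∑ j : Fin n, (a j * x (Sum.inl j) ^ 2
          + 2 * b j * (x (Sum.inl j) * x (Sum.inr j)) + c j * x (Sum.inr j) ^ 2)
        = a i * z 0 ^ 2 + 2 * b i * (z 0 * z 1) + c i * z 1 ^ 2 := by
      rw [Finset.sum_eq_single i]
      · simp [hxdef]
      · intro j _ hji; simp [hxdef, hji]
      · intro hi; exact absurd (Finset.mem_univ i) hi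
    rw [hsum] at this
    have heq : (!![kpv i / τp i - γ, (kpv i / τp i + kqv i / τq i)/2;
                 (kpv i / τp i + kqv i / τq i)/2, kqv i / τq i - γ])
        = !![a i, b i; b i, c i] := by rw [ha, hb, hc]
    rw [heq, hq2]
    exact this
  · intro h x hx
    rw [hq]
    have hterm : ∀ i : Fin n, (fun z : Fin 2 → ℝ => z) ![x (Sum.inl i), x (Sum.inr i)] ≠ 0 →
        a i * x (Sum.inl i) ^ 2 + 2 * b i * (x (Sum.inl i) * x (Sum.inr i))
          + c i * x (Sum.inr i) ^ 2 < 0 := by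
      intro i hzi
      have := h i ![x (Sum.inl i), x (Sum.inr i)] hzi
      have heq : (!![kpv i / τp i - γ, (kpv i / τp i + kqv i / τq i)/2;
                 (kpv i / τp i + kqv i / τq i)/2, kqv i / τq i - γ])
          = !![a i, b i; b i, c i] := by rw [ha, hb, hc]
      rw [heq, hq2] at this
      simpa using this
    have hle : ∀ i : Fin n, a i * x (Sum.inl i) ^ 2
        + 2 * b i * (x (Sum.inl i) * x (Sum.inr i)) + c i * x (Sum.inr i) ^ 2 ≤ 0 := by
      intro i
      by_cases hzi : (![x (Sum.inl i), x (Sum.inr i)] : Fin 2 → ℝ) = 0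
      · have h0 : x (Sum.inl i) = 0 := by
          have := congrFun hzi 0; simpa using this
        have h1 : x (Sum.inr i) = 0 := by
          have := congrFun hzi 1; simpa using this
        simp [h0, h1]
      · exact le_of_lt (hterm i hzi)
    obtain ⟨s, hs⟩ : ∃ s, x s ≠ 0 := by
      by_contra hcon
      push_neg at hcon
      exact hx (funext hcon)
    have hi0 : ∃ i : Fin n, (![x (Sum.inl i), x (Sum.inr i)] : Fin 2 → ℝ) ≠ 0 := by
      cases s with
      | inl i =>
        refine ⟨i, fun h0 => hs ?_⟩
        have := congrFun h0 0; simpa using this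
      | inr i =>
        refine ⟨i, fun h0 => hs ?_⟩
        have := congrFun h0 1; simpa using this
    obtain ⟨i0, hi0⟩ := hi0
    calc ∑ i : Fin n, (a i * x (Sum.inl i) ^ 2
          + 2 * b i * (x (Sum.inl i) * x (Sum.inr i)) + c i * x (Sum.inr i) ^ 2)
        < ∑ _i : Fin n, (0 : ℝ) := by
          apply Finset.sum_lt_sum (fun i _ => hle i)
          exact ⟨i0, Finset.mem_univ i0, hterm i0 hi0⟩
      _ = 0 := by simp
end

section
/- If a linear time-invariant system ẋ = Ax admits a quadratic Lyapunov function V(x) = (1/2)xᵀGx with G symmetric positive definite such that xᵀ(GA)x < 0 for all x ≠ 0, then every eigenvalue of A has strictly negative real part. -/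
open Matrix

theorem re_quad {m : ℕ} (M : Matrix (Fin m) (Fin m) ℝ) (v : Fin m → ℂ) :
    (star v ⬝ᵥ (M.map Complex.ofReal).mulVec v).re =
      (fun i => (v i).re) ⬝ᵥ M.mulVec (fun i => (v i).re) +
      (fun i => (v i).im) ⬝ᵥ M.mulVec (fun i => (v i).im) := by
  simp only [dotProduct, mulVec, Matrix.map_apply, Pi.star_apply, Complex.star_def,
    Complex.re_sum, Complex.mul_re, Complex.im_sum, Complex.conj_re, Complex.conj_im,
    Complex.ofReal_re, Complex.ofReal_im, zero_mul, sub_zero, Complex.mul_im, add_zero]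
  rw [← Finset.sum_add_distrib]
  exact Finset.sum_congr rfl fun i _ => by ring

theorem im_quad {m : ℕ} (M : Matrix (Fin m) (Fin m) ℝ) (v : Fin m → ℂ) :
    (star v ⬝ᵥ (M.map Complex.ofReal).mulVec v).im =
      (fun i => (v i).re) ⬝ᵥ M.mulVec (fun i => (v i).im) -
      (fun i => (v i).im) ⬝ᵥ M.mulVec (fun i => (v i).re) := by
  simp only [dotProduct, mulVec, Matrix.map_apply, Pi.star_apply, Complex.star_def,
    Complex.re_sum, Complex.mul_re, Complex.im_sum, Complex.conj_re, Complex.conj_im,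
    Complex.ofReal_re, Complex.ofReal_im, zero_mul, sub_zero, Complex.mul_im, add_zero]
  rw [← Finset.sum_sub_distrib]
  exact Finset.sum_congr rfl fun i _ => by ring

theorem lyapunov_implies_hurwitz {m : ℕ}
    (A G : Matrix (Fin m) (Fin m) ℝ) (hG : G.PosDef)
    (hV : ∀ x : Fin m → ℝ, x ≠ 0 → x ⬝ᵥ ((G * A).mulVec x) < 0) :
    ∀ (μ : ℂ) (v : Fin m → ℂ), v ≠ 0 →
      (A.map (Complex.ofReal)).mulVec v = μ • v → μ.re < 0 := by
  intro μ v hv hAv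
  set x : Fin m → ℝ := fun i => (v i).re with hxdef
  set y : Fin m → ℝ := fun i => (v i).im with hydef
  have hxy : x ≠ 0 ∨ y ≠ 0 := by
    by_contra h
    push_neg at h
    apply hv
    funext i
    have h1 : x i = 0 := by rw [h.1]; rfl
    have h2 : y i = 0 := by rw [h.2]; rfl
    exact Complex.ext h1 h2
  -- the complexified (G * A) factors
  have hmap : (G * A).map Complex.ofReal
      = (G.map Complex.ofReal) * (A.map Complex.ofReal) := by
    ext i j
    simp [Matrix.mul_apply, Matrix.map_apply]
  -- p = μ * q
  have hmv : ((G * A).map Complex.ofReal).mulVec v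
      = μ • (G.map Complex.ofReal).mulVec v := by
    rw [hmap, ← mulVec_mulVec, hAv, mulVec_smul]
  set p : ℂ := star v ⬝ᵥ ((G * A).map Complex.ofReal).mulVec v with hp
  set q : ℂ := star v ⬝ᵥ (G.map Complex.ofReal).mulVec v with hq
  have hpq : p = μ * q := by
    rw [hp, hmv, dotProduct_smul, smul_eq_mul, hq]
  -- G is symmetric
  have hGT : Gᵀ = G := by simpa [Matrix.IsSymm] using hG.1
  -- q is real
  have hqim : q.im = 0 := by
    rw [hq, im_quad]
    have : x ⬝ᵥ G.mulVec y = y ⬝ᵥ G.mulVec x := by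
      rw [dotProduct_mulVec, ← mulVec_transpose, hGT, dotProduct_comm]
    simp only [← hxdef, ← hydef] at *
    rw [this]
    ring
  -- quadratic form facts
  have hGnn : ∀ z : Fin m → ℝ, 0 ≤ z ⬝ᵥ G.mulVec z := by
    intro z
    rcases eq_or_ne z 0 with h | h
    · simp [h]
    · have := hG.dotProduct_mulVec_pos h
      simp only [star_trivial] at this
      exact le_of_lt (by simpa using this)
  have hMnp : ∀ z : Fin m → ℝ, z ⬝ᵥ (G * A).mulVec z ≤ 0 := by
    intro z
    rcases eq_or_ne z 0 with h | h
    · simp [h]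
    · exact le_of_lt (hV z h)
  have hqre : 0 < q.re := by
    rw [hq, re_quad]
    simp only [← hxdef, ← hydef]
    rcases hxy with h | h
    · have h1 := hG.dotProduct_mulVec_pos h
      simp only [star_trivial] at h1
      have h1' : 0 < x ⬝ᵥ G.mulVec x := by simpa using h1
      have h2 := hGnn y
      linarith
    · have h1 := hG.dotProduct_mulVec_pos h
      simp only [star_trivial] at h1
      have h1' : 0 < y ⬝ᵥ G.mulVec y := by simpa using h1
      have h2 := hGnn x
      linarith
  have hpre : p.re < 0 := by
    rw [hp, re_quad]
    simp only [← hxdef, ← hydef]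
    rcases hxy with h | h
    · have h1 := hV x h
      have h2 := hMnp y
      linarith
    · have h1 := hV y h
      have h2 := hMnp x
      linarith
  have : p.re = μ.re * q.re := by
    rw [hpq, Complex.mul_re, hqim]
    ring
  nlinarith
end
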